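/- (Posterior decomposition bound) Let f_θ be a family of densities, π a prior on a parameter space, θ* the true parameter, C a measurable set of parameters, κ a test function with values in [0,1], and H = {y : ∫ (f_θ(y)/f_{θ*}(y)) π(dθ) ≥ e^{-c}}. Then E_{θ*}[Π(C | y)] ≤ E_{θ*}[κ] + e^{c} · sup_{θ∈C} E_θ[1 − κ] + P_{θ*}(H^c), where Π(C|y) = ∫_C f_θ(y)π(dθ)/∫ f_θ(y)π(dθ). -/

import Mathlib

open MeasureTheory

/-- Posterior decomposition bound: with test `κ`, set of parameters `C`, and event
`H = {y : ∫ f_θ(y)/f_{θ*}(y) π(dθ) ≥ e^{-c}}`,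
`E_{θ*}[Π(C|y)] ≤ E_{θ*}[κ] + e^c · sup_{θ∈C} E_θ[1-κ] + P_{θ*}(H^c)`. -/
theorem stmt_12 {Θ Y : Type*} [MeasurableSpace Θ] [MeasurableSpace Y]
    (π : Measure Θ) [IsProbabilityMeasure π] (ν : Measure Y) [SigmaFinite ν]
    (f : Θ → Y → ℝ)
    (hfmeas : Measurable (Function.uncurry f))
    (hfpos : ∀ θ y, 0 < f θ y)
    (hfdens : ∀ θ, ∫ y, f θ y ∂ν = 1)
    (hfint : ∀ θ, Integrable (f θ) ν)
    (θstar : Θ) (C : Set Θ) (hC : MeasurableSet C)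
    (κ : Y → ℝ) (hκmeas : Measurable κ) (hκ : ∀ y, 0 ≤ κ y ∧ κ y ≤ 1)
    (c : ℝ) (hc : 0 < c)
    (H : Set Y) (hH : H = {y | Real.exp (-c) ≤ ∫ θ, f θ y / f θstar y ∂π})
    (hHmeas : MeasurableSet H)
    (post : Y → ℝ)
    (hpost : post = fun y => (∫ θ in C, f θ y ∂π) / ∫ θ, f θ y ∂π)
    (hpostint : Integrable (fun y => post y * f θstar y) ν)
    (hbdd : BddAbove ((fun θ => ∫ y, (1 - κ y) * f θ y ∂ν) '' C)) :
    ∫ y, post y * f θstar y ∂ν ≤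
      (∫ y, κ y * f θstar y ∂ν) +
        Real.exp c * (⨆ θ ∈ C, ∫ y, (1 - κ y) * f θ y ∂ν) +
          ∫ y in Hᶜ, f θstar y ∂ν := by
  set F : Y → ℝ := fun y => ∫ θ in C, f θ y ∂π with hFdef
  set G : Y → ℝ := fun y => ∫ θ, f θ y ∂π with hGdef
  set S : ℝ := ⨆ θ ∈ C, ∫ y, (1 - κ y) * f θ y ∂ν with hSdef
  have hθm : ∀ θ, Measurable (f θ) := fun θ =>
    hfmeas.comp measurable_prodMk_left
  have mF : Measurable F :=
    (hfmeas.stronglyMeasurable.integral_prod_left (μ := π.restrict C)).measurable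
  have mG : Measurable G :=
    (hfmeas.stronglyMeasurable.integral_prod_left (μ := π)).measurable
  have mpost : Measurable post := by rw [hpost]; exact mF.div mG
  have hrange : BddAbove (Set.range fun θ => ⨆ _ : θ ∈ C, ∫ y, (1 - κ y) * f θ y ∂ν) := by
    obtain ⟨M, hM⟩ := hbdd
    refine ⟨max M 0, ?_⟩
    rintro x ⟨θ', rfl⟩
    show (⨆ _ : θ' ∈ C, ∫ y, (1 - κ y) * f θ' y ∂ν) ≤ max M 0
    by_cases h' : θ' ∈ C
    · rw [ciSup_pos h']
      exact le_max_of_le_left (hM (Set.mem_image_of_mem _ h'))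
    · haveI : IsEmpty (θ' ∈ C) := ⟨h'⟩
      rw [Real.iSup_of_isEmpty]
      exact le_max_right _ _
  have hSle : ∀ θ ∈ C, (∫ y, (1 - κ y) * f θ y ∂ν) ≤ S := by
    intro θ hθ
    have h1 : (∫ y, (1 - κ y) * f θ y ∂ν) = ⨆ _ : θ ∈ C, ∫ y, (1 - κ y) * f θ y ∂ν :=
      (ciSup_pos (f := fun _ => ∫ y, (1 - κ y) * f θ y ∂ν) hθ).symm
    rw [hSdef, h1]
    exact le_ciSup hrange θ
  have hIκf : ∀ θ, Integrable (fun y => (1 - κ y) * f θ y) ν := by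
    intro θ
    refine (hfint θ).bdd_mul ((measurable_const.sub hκmeas).aestronglyMeasurable) (c := 1) (Filter.Eventually.of_forall ?_)
    intro y
    have := hκ y
    rw [Real.norm_eq_abs, abs_le]
    constructor <;> linarith [this.1, this.2]
  have hS0 : 0 ≤ S := by
    rcases C.eq_empty_or_nonempty with h | ⟨θ0, hθ0⟩
    · have : S = 0 := by
        rw [hSdef]
        have : ∀ θ : Θ, (⨆ _ : θ ∈ C, ∫ y, (1 - κ y) * f θ y ∂ν) = 0 := by
          intro θ
          haveI : IsEmpty (θ ∈ C) := ⟨fun hx => by rw [h] at hx; exact hx⟩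
          exact Real.iSup_of_isEmpty _
        simp only [this, Real.iSup_const_zero]
      rw [this]
    · refine le_trans ?_ (hSle θ0 hθ0)
      exact integral_nonneg fun y => mul_nonneg (by linarith [(hκ y).2]) (hfpos θ0 y).le
  have hFnn : ∀ y, 0 ≤ F y := fun y =>
    integral_nonneg fun θ => (hfpos θ y).le
  have hpost_nn : ∀ y, 0 ≤ post y := by
    intro y; rw [hpost]
    exact div_nonneg (hFnn y) (integral_nonneg fun θ => (hfpos θ y).le)
  have hpost_le1 : ∀ y, post y ≤ 1 := by
    intro y
    rw [hpost]
    show (∫ θ in C, f θ y ∂π) / (∫ θ, f θ y ∂π) ≤ 1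
    by_cases hi : Integrable (fun θ => f θ y) π
    · rcases eq_or_lt_of_le (integral_nonneg fun θ => (hfpos θ y).le : (0:ℝ) ≤ ∫ θ, f θ y ∂π) with h0 | h0
      · rw [← h0]; simp
      · rw [div_le_one h0]
        exact setIntegral_le_integral hi (Filter.Eventually.of_forall fun θ => (hfpos θ y).le)
    · rw [integral_undef hi]
      simp
  set g : Y → ℝ := fun y => (1 - κ y) * (post y * f θstar y) with hgdef
  have mg : Measurable g :=
    (measurable_const.sub hκmeas).mul (mpost.mul (hθm θstar))
  have hIg : Integrable g ν := by
    refine hpostint.bdd_mul ((measurable_const.sub hκmeas).aestronglyMeasurable) (c := 1) (Filter.Eventually.of_forall ?_)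
    intro y
    have := hκ y
    rw [Real.norm_eq_abs, abs_le]
    constructor <;> linarith [this.1, this.2]
  have hIκfs : Integrable (fun y => κ y * f θstar y) ν := by
    refine (hfint θstar).bdd_mul hκmeas.aestronglyMeasurable (c := 1) (Filter.Eventually.of_forall ?_)
    intro y
    have := hκ y
    rw [Real.norm_eq_abs, abs_le]
    constructor <;> linarith [this.1, this.2]
  have hg_nn : ∀ y, 0 ≤ g y := fun y =>
    mul_nonneg (by linarith [(hκ y).2]) (mul_nonneg (hpost_nn y) (hfpos θstar y).le)
  have hg_le : ∀ y, g y ≤ f θstar y := by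
    intro y
    calc g y ≤ 1 * (1 * f θstar y) := by
          refine mul_le_mul (by linarith [(hκ y).1])
            (mul_le_mul (hpost_le1 y) le_rfl (hfpos θstar y).le zero_le_one)
            (mul_nonneg (hpost_nn y) (hfpos θstar y).le) zero_le_one
      _ = f θstar y := by ring
  -- step 1: pointwise decomposition
  have step1 : ∫ y, post y * f θstar y ∂ν ≤ (∫ y, κ y * f θstar y ∂ν) + ∫ y, g y ∂ν := by
    rw [← integral_add hIκfs hIg]
    refine integral_mono hpostint (hIκfs.add hIg) fun y => ?_
    have h1 : post y * f θstar y = κ y * (post y * f θstar y) + g y := by ring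
    rw [h1]
    have := mul_le_mul (le_refl (κ y))
      (mul_le_mul (hpost_le1 y) le_rfl (hfpos θstar y).le zero_le_one)
      (mul_nonneg (hpost_nn y) (hfpos θstar y).le) (hκ y).1
    simp only [one_mul] at this
    simp only [g]
    linarith
  have step2 : ∫ y, g y ∂ν = (∫ y in H, g y ∂ν) + ∫ y in Hᶜ, g y ∂ν :=
    (integral_add_compl hHmeas hIg).symm
  have step3 : ∫ y in Hᶜ, g y ∂ν ≤ ∫ y in Hᶜ, f θstar y ∂ν :=
    setIntegral_mono (hIg.restrict) ((hfint θstar).restrict) fun y => hg_le y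
  -- key pointwise bound on H
  have key : ∀ y ∈ H, g y ≤ Real.exp c * ((1 - κ y) * F y) := by
    intro y hy
    rw [hH] at hy
    have hdiv : (∫ θ, f θ y / f θstar y ∂π) = G y / f θstar y := by
      rw [hGdef]; exact integral_div _ _
    rw [Set.mem_setOf_eq, hdiv] at hy
    have hfs : 0 < f θstar y := hfpos θstar y
    have hGpos : Real.exp (-c) * f θstar y ≤ G y := by
      rw [le_div_iff₀ hfs] at hy
      linarith [hy]
    have hG0 : 0 < G y := lt_of_lt_of_le (by positivity) hGpos
    have hpf : post y * f θstar y ≤ Real.exp c * F y := by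
      rw [hpost]
      show F y / G y * f θstar y ≤ Real.exp c * F y
      have heq : F y / G y * f θstar y = F y * (f θstar y / G y) := by ring
      rw [heq]
      have hfr : f θstar y / G y ≤ Real.exp c := by
        rw [div_le_iff₀ hG0]
        calc f θstar y = Real.exp c * (Real.exp (-c) * f θstar y) := by
              rw [← mul_assoc, ← Real.exp_add]; simp
          _ ≤ Real.exp c * G y :=
              mul_le_mul_of_nonneg_left hGpos (Real.exp_nonneg c)
      calc F y * (f θstar y / G y) ≤ F y * Real.exp c :=
            mul_le_mul_of_nonneg_left hfr (hFnn y)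
        _ = Real.exp c * F y := by ring
    calc g y = (1 - κ y) * (post y * f θstar y) := rfl
      _ ≤ (1 - κ y) * (Real.exp c * F y) :=
          mul_le_mul_of_nonneg_left hpf (by linarith [(hκ y).2])
      _ = Real.exp c * ((1 - κ y) * F y) := by ring
  -- step 4: bound ∫_H g via lintegral
  have step4 : ∫ y in H, g y ∂ν ≤ Real.exp c * S := by
    have hgl : ∫ y in H, g y ∂ν
        = (∫⁻ y in H, ENNReal.ofReal (g y) ∂ν).toReal := by
      rw [integral_eq_lintegral_of_nonneg_ae
        (Filter.Eventually.of_forall fun y => hg_nn y)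
        (mg.aestronglyMeasurable.restrict)]
    rw [hgl]
    have hA1 : (∫⁻ y in H, ENNReal.ofReal (g y) ∂ν)
        ≤ ∫⁻ y in H, ENNReal.ofReal (Real.exp c) *
            ENNReal.ofReal ((1 - κ y) * F y) ∂ν := by
      have mφ : Measurable (fun y => ENNReal.ofReal ((1 - κ y) * F y)) :=
        ((measurable_const.sub hκmeas).mul mF).ennreal_ofReal
      refine setLIntegral_mono (mφ.const_mul _) fun y hy => ?_
      calc ENNReal.ofReal (g y) ≤ ENNReal.ofReal (Real.exp c * ((1 - κ y) * F y)) :=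
            ENNReal.ofReal_le_ofReal (key y hy)
        _ = ENNReal.ofReal (Real.exp c) * ENNReal.ofReal ((1 - κ y) * F y) :=
            ENNReal.ofReal_mul (Real.exp_nonneg c)
    have hA2 : (∫⁻ y in H, ENNReal.ofReal (Real.exp c) *
            ENNReal.ofReal ((1 - κ y) * F y) ∂ν)
        ≤ ENNReal.ofReal (Real.exp c) *
            ∫⁻ y, ENNReal.ofReal ((1 - κ y) * F y) ∂ν := by
      have mφ : Measurable (fun y => ENNReal.ofReal ((1 - κ y) * F y)) :=
        ((measurable_const.sub hκmeas).mul mF).ennreal_ofReal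
      rw [← lintegral_const_mul _ mφ]
      exact setLIntegral_le_lintegral _ _
    have hA3 : (∫⁻ y, ENNReal.ofReal ((1 - κ y) * F y) ∂ν)
        ≤ ∫⁻ y, ∫⁻ θ in C, ENNReal.ofReal ((1 - κ y) * f θ y) ∂π ∂ν := by
      refine lintegral_mono fun y => ?_
      have h1 : ENNReal.ofReal (F y)
          ≤ ∫⁻ θ in C, ENNReal.ofReal (f θ y) ∂π := by
        by_cases hi : Integrable (fun θ => f θ y) (π.restrict C)
        · rw [ofReal_integral_eq_lintegral_ofReal hi
            (Filter.Eventually.of_forall fun θ => (hfpos θ y).le)]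
        · rw [hFdef]
          simp only []
          rw [integral_undef hi]
          simp
      calc ENNReal.ofReal ((1 - κ y) * F y)
          = ENNReal.ofReal (1 - κ y) * ENNReal.ofReal (F y) :=
            ENNReal.ofReal_mul (by linarith [(hκ y).2])
        _ ≤ ENNReal.ofReal (1 - κ y) * ∫⁻ θ in C, ENNReal.ofReal (f θ y) ∂π :=
            mul_le_mul_right h1 _
        _ = ∫⁻ θ in C, ENNReal.ofReal (1 - κ y) * ENNReal.ofReal (f θ y) ∂π := by
            have mθ : Measurable (fun θ => ENNReal.ofReal (f θ y)) :=
              (hfmeas.comp (measurable_id.prodMk measurable_const)).ennreal_ofReal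
            rw [lintegral_const_mul _ mθ]
        _ = ∫⁻ θ in C, ENNReal.ofReal ((1 - κ y) * f θ y) ∂π := by
            refine lintegral_congr fun θ => ?_
            rw [ENNReal.ofReal_mul (by linarith [(hκ y).2])]
    have hswap : (∫⁻ y, ∫⁻ θ in C, ENNReal.ofReal ((1 - κ y) * f θ y) ∂π ∂ν)
        = ∫⁻ θ in C, ∫⁻ y, ENNReal.ofReal ((1 - κ y) * f θ y) ∂ν ∂π := by
      refine lintegral_lintegral_swap ?_
      have mswap : Measurable (fun p : Y × Θ => ENNReal.ofReal ((1 - κ p.1) * f p.2 p.1)) :=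
        ((measurable_const.sub (hκmeas.comp measurable_fst)).mul
          (hfmeas.comp measurable_swap)).ennreal_ofReal
      exact mswap.aemeasurable
    have hA4 : (∫⁻ θ in C, ∫⁻ y, ENNReal.ofReal ((1 - κ y) * f θ y) ∂ν ∂π)
        ≤ ENNReal.ofReal S := by
      have heq : ∀ θ, (∫⁻ y, ENNReal.ofReal ((1 - κ y) * f θ y) ∂ν)
          = ENNReal.ofReal (∫ y, (1 - κ y) * f θ y ∂ν) := fun θ =>
        (ofReal_integral_eq_lintegral_ofReal (hIκf θ)
          (Filter.Eventually.of_forall fun y =>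
            mul_nonneg (by linarith [(hκ y).2]) (hfpos θ y).le)).symm
      calc (∫⁻ θ in C, ∫⁻ y, ENNReal.ofReal ((1 - κ y) * f θ y) ∂ν ∂π)
          ≤ ∫⁻ _ in C, ENNReal.ofReal S ∂π := by
            refine setLIntegral_mono measurable_const fun θ hθ => ?_
            rw [heq θ]
            exact ENNReal.ofReal_le_ofReal (hSle θ hθ)
        _ = ENNReal.ofReal S * π C := setLIntegral_const _ _
        _ ≤ ENNReal.ofReal S * 1 := mul_le_mul_right prob_le_one _
        _ = ENNReal.ofReal S := mul_one _
    have hfinal : (∫⁻ y in H, ENNReal.ofReal (g y) ∂ν)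
        ≤ ENNReal.ofReal (Real.exp c) * ENNReal.ofReal S := by
      calc (∫⁻ y in H, ENNReal.ofReal (g y) ∂ν)
          ≤ ENNReal.ofReal (Real.exp c) *
            ∫⁻ y, ENNReal.ofReal ((1 - κ y) * F y) ∂ν := hA1.trans hA2
        _ ≤ ENNReal.ofReal (Real.exp c) * ENNReal.ofReal S := by
            refine mul_le_mul_right ?_ _
            exact le_trans hA3 (le_of_eq hswap |>.trans hA4)
    calc (∫⁻ y in H, ENNReal.ofReal (g y) ∂ν).toReal
        ≤ (ENNReal.ofReal (Real.exp c) * ENNReal.ofReal S).toReal := by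
          refine ENNReal.toReal_mono ?_ hfinal
          exact ENNReal.mul_ne_top ENNReal.ofReal_ne_top ENNReal.ofReal_ne_top
      _ = Real.exp c * S := by
          rw [ENNReal.toReal_mul, ENNReal.toReal_ofReal (Real.exp_nonneg c),
            ENNReal.toReal_ofReal hS0]
  linarith [step1, step2, step3, step4]
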